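/- For every symmetric cocycle h on J and all a, b in the Peirce component J_1 = {(x,v) ∈ J : x = 0}, the element h(a,b) also lies in J_1; that is, the first component of h(a,b) is zero. -/

import Mathlib

/-- The "marginal" Jordan algebra `J = ℂ × (Fin m → ℂ)` with multiplication
`(a,v)∘(b,w) = (a·b, (1/2)·(a·w + b·v))`; i.e. with basis `e, n_1, …, n_m`,
`e∘e = e`, `e∘n_i = (1/2)n_i`, `n_i∘n_j = 0`, where `e = (1,0)`. -/
noncomputable def jmul (m : ℕ) (x y : ℂ × (Fin m → ℂ)) : ℂ × (Fin m → ℂ) :=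
  (x.1 * y.1, (1 / 2 : ℂ) • (x.1 • y.2 + y.1 • x.2))

/-- The idempotent `e = (1, 0)` of `J`. -/
def jE (m : ℕ) : ℂ × (Fin m → ℂ) := ((1 : ℂ), (0 : Fin m → ℂ))

/-- For every symmetric cocycle `h` on `J` and all `a, b` in the Peirce
component `J₁ = {(x,v) : x = 0}`, the element `h(a,b)` also lies in `J₁`. -/
theorem cocycle_h_J1_J1_in_J1 (m : ℕ) (hm : 1 ≤ m)
    (h : (ℂ × (Fin m → ℂ)) →ₗ[ℂ] (ℂ × (Fin m → ℂ)) →ₗ[ℂ] (ℂ × (Fin m → ℂ)))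
    (hsymm : ∀ a b, h a b = h b a)
    (hcoc : ∀ a b,
      jmul m (jmul m (h a a) b) a + jmul m (h (jmul m a a) b) a
          + h (jmul m (jmul m a a) b) a
        = jmul m (jmul m a a) (h b a) + jmul m (h a a) (jmul m b a)
          + h (jmul m a a) (jmul m b a)) :
    ∀ a b : ℂ × (Fin m → ℂ), a.1 = 0 → b.1 = 0 → (h a b).1 = 0 := by
  have key : ∀ a : ℂ × (Fin m → ℂ), a.1 = 0 → (h a a).1 = 0 := by
    intro a ha
    by_cases h0 : a.2 = 0
    · have haz : a = 0 := Prod.ext ha h0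
      simp [haz]
    · obtain ⟨i, hi⟩ : ∃ i, a.2 i ≠ 0 := by
        by_contra hc; push_neg at hc; exact h0 (funext hc)
      have haa : jmul m a a = 0 := by
        simp [jmul, ha, Prod.ext_iff]
      have hc := hcoc a (jE m)
      rw [haa] at hc
      simp only [map_zero, LinearMap.zero_apply] at hc
      have hsnd := congrArg (fun p => p.2 i) hc
      simp [jmul, jE, ha, Prod.mk_zero_zero] at hsnd
      rcases hsnd with hs | hs
      · exact absurd (by linear_combination 2 * hs) hi
      · exact hs
  intro a b ha hb
  have hab : ((a + b).1 : ℂ) = 0 := by simp [ha, hb]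
  have h1 := key (a + b) hab
  simp only [map_add, LinearMap.add_apply, Prod.fst_add] at h1
  rw [key a ha, key b hb, hsymm b a] at h1
  have : (2 : ℂ) * (h a b).1 = 0 := by ring_nf; linear_combination h1
  simpa using this
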